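/- With the hypotheses of the p = 3 bound (N a positive integer, g ≥ 2, h ≥ 0, each m_i a power of 3 with m_i ≥ 3, 2(g-1) = N(2h - 2 + Σ(1 - 1/m_i)), d = 3h - 3 + l ≥ 1), equality N = 3(g-1)/d holds if and only if every m_i = 3 and l = d + 3 - 3h for some integer h with 0 ≤ h ≤ ⌊d/3 + 1⌋. -/
import Mathlib


/-- In the p = 3 setup, equality N = 3(g-1)/d holds iff every period is 3
and l = d + 3 - 3h with 0 ≤ h ≤ ⌊d/3 + 1⌋. -/
theorem three_group_equality (N g d h l : ℕ) (m : Fin l → ℕ)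
    (hN : 1 ≤ N) (hg : 2 ≤ g)
    (hm3 : ∀ i, 3 ≤ m i) (hmpow : ∀ i, ∃ k : ℕ, m i = 3 ^ k)
    (hd : 1 ≤ d) (hdim : 3 * (h : ℤ) - 3 + l = d)
    (hRH : 2 * ((g : ℚ) - 1) = N * (2 * (h : ℚ) - 2 + ∑ i, (1 - 1 / (m i : ℚ)))) :
    (N : ℚ) = 3 * ((g : ℚ) - 1) / (d : ℚ) ↔
      ((∀ i, m i = 3) ∧ (l : ℤ) = d + 3 - 3 * h ∧ h ≤ d / 3 + 1) := by
  have hdQ : (1 : ℚ) ≤ (d : ℚ) := by exact_mod_cast hd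
  have hNQ : (1 : ℚ) ≤ (N : ℚ) := by exact_mod_cast hN
  have hlQ : (l : ℚ) = (d : ℚ) + 3 - 3 * h := by
    have hlZ : (l : ℤ) = (d : ℤ) + 3 - 3 * h := by omega
    have := congrArg (fun x : ℤ => (x : ℚ)) hlZ
    push_cast at this
    exact this
  constructor
  · intro hEq
    have hNd : (N : ℚ) * d = 3 * ((g : ℚ) - 1) := by
      field_simp at hEq
      linarith
    refine ⟨?_, by omega, by omega⟩
    by_contra hc
    push_neg at hc
    obtain ⟨j, hj⟩ := hc
    have hj4 : 4 ≤ m j := by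
      have := hm3 j
      omega
    have hle : ∀ i ∈ Finset.univ, (2/3 : ℚ) ≤ 1 - 1 / (m i : ℚ) := by
      intro i _
      have h3 : (3 : ℚ) ≤ (m i : ℚ) := by exact_mod_cast hm3 i
      have : 1 / (m i : ℚ) ≤ 1 / 3 := by
        apply one_div_le_one_div_of_le <;> linarith
      linarith
    have hlt : (2/3 : ℚ) < 1 - 1 / (m j : ℚ) := by
      have h4 : (4 : ℚ) ≤ (m j : ℚ) := by exact_mod_cast hj4
      have : 1 / (m j : ℚ) ≤ 1 / 4 := by
        apply one_div_le_one_div_of_le <;> linarith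
      linarith
    have hsum : (l : ℚ) * (2/3) < ∑ i, (1 - 1 / (m i : ℚ)) := by
      have := Finset.sum_lt_sum hle ⟨j, Finset.mem_univ j, hlt⟩
      simpa [Finset.sum_const, Finset.card_univ, mul_comm] using this
    have hgt : 2 * ((g : ℚ) - 1) > (N : ℚ) * (2 * (h : ℚ) - 2 + (l : ℚ) * (2/3)) := by
      rw [hRH]
      have hNpos : (0 : ℚ) < N := by linarith
      apply mul_lt_mul_of_pos_left _ hNpos
      linarith
    nlinarith [hgt, hNd, hlQ]
  · rintro ⟨hall, -, -⟩
    have hsum : ∑ i, (1 - 1 / (m i : ℚ)) = (l : ℚ) * (2/3) := by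
      have : ∀ i ∈ Finset.univ, (1 - 1 / (m i : ℚ)) = (2/3 : ℚ) := by
        intro i _
        rw [hall i]; norm_num
      rw [Finset.sum_congr rfl this]
      simp [Finset.sum_const, Finset.card_univ, mul_comm]
    rw [hsum] at hRH
    have hdpos : (d : ℚ) ≠ 0 := by linarith
    field_simp
    nlinarith [hRH, hlQ]
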